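/- Let $0 < r < \tfrac12$ and let $K$ be the attractor of the self-similar IFS on $\mathbb{R}^2$ given by $\varphi_1(x) = rx$, $\varphi_2(x) = rx + (1-r, 0)$, $\varphi_3(x) = rx + (0, 1-r)$, $\varphi_4(x) = rx + (1-r, 1-r)$, $\varphi_5(x) = r R_{\pi/4} x + \big(\tfrac12, \tfrac12 - \tfrac{\sqrt2}{2} r\big)$, where $R_{\pi/4}$ is the rotation of $\mathbb{R}^2$ by angle $\pi/4$ about the origin. Then $\pi_W(K) = \pi_W([0,1]^2)$ for every one-dimensional linear subspace $W$ of $\mathbb{R}^2$ if and only if $r \ge 1/3$. -/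

import Mathlib

open Set Module

/-- The point `(a, b)` of the Euclidean plane. -/
noncomputable def mk2 (a b : ℝ) : EuclideanSpace ℝ (Fin 2) := WithLp.toLp 2 ![a, b]

/-- Rotation of the plane by `π/4` about the origin. -/
noncomputable def rot45 (p : EuclideanSpace ℝ (Fin 2)) : EuclideanSpace ℝ (Fin 2) :=
  mk2 ((p 0 - p 1) / Real.sqrt 2) ((p 0 + p 1) / Real.sqrt 2)

/-- Orthogonal projection onto a subspace, viewed as a map of the ambient space. -/
noncomputable def orthProj (W : Submodule ℝ (EuclideanSpace ℝ (Fin 2)))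
    (x : EuclideanSpace ℝ (Fin 2)) : EuclideanSpace ℝ (Fin 2) :=
  (W.orthogonalProjection x : EuclideanSpace ℝ (Fin 2))

/-- The unit square `[0,1]²`. -/
def unitSq : Set (EuclideanSpace ℝ (Fin 2)) := {p | ∀ i, p i ∈ Icc (0 : ℝ) 1}

namespace RSaux

lemma q_sq : Real.sqrt 2 ^ 2 = 2 := Real.sq_sqrt (by norm_num)
lemma q_pos : (0:ℝ) < Real.sqrt 2 := Real.sqrt_pos.mpr (by norm_num)
lemma q_gt : (1.4:ℝ) < Real.sqrt 2 := by nlinarith [q_sq, q_pos]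
lemma q_lt : Real.sqrt 2 < 1.5 := by nlinarith [q_sq, q_pos]

lemma div_sqrt2 (x : ℝ) : x / Real.sqrt 2 = x * Real.sqrt 2 / 2 := by
  have h2 : Real.sqrt 2 ≠ 0 := ne_of_gt q_pos
  field_simp
  linear_combination (-x) * q_sq

@[simp] lemma mk2_zero (a b : ℝ) : mk2 a b 0 = a := by simp [mk2]
@[simp] lemma mk2_one (a b : ℝ) : mk2 a b 1 = b := by simp [mk2]
@[simp] lemma smul_apply (r : ℝ) (p : EuclideanSpace ℝ (Fin 2)) (i : Fin 2) :
    (r • p) i = r * p i := rfl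
@[simp] lemma add_apply (p q : EuclideanSpace ℝ (Fin 2)) (i : Fin 2) :
    (p + q) i = p i + q i := rfl
@[simp] lemma sub_apply (p q : EuclideanSpace ℝ (Fin 2)) (i : Fin 2) :
    (p - q) i = p i - q i := rfl

lemma mem_unitSq {p : EuclideanSpace ℝ (Fin 2)} :
    p ∈ unitSq ↔ 0 ≤ p 0 ∧ p 0 ≤ 1 ∧ 0 ≤ p 1 ∧ p 1 ≤ 1 := by
  constructor
  · intro h; exact ⟨(h 0).1, (h 0).2, (h 1).1, (h 1).2⟩
  · rintro ⟨h1, h2, h3, h4⟩ i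
    fin_cases i <;> exact ⟨by assumption, by assumption⟩

lemma isClosed_unitSq : IsClosed unitSq := by
  have : unitSq = ⋂ i : Fin 2, (fun p : EuclideanSpace ℝ (Fin 2) => p i) ⁻¹' (Icc 0 1) := by
    ext p; simp [unitSq, mem_iInter]
  rw [this]
  exact isClosed_iInter fun i =>
    IsClosed.preimage (EuclideanSpace.proj i).continuous isClosed_Icc

lemma rot45_sub (a b : EuclideanSpace ℝ (Fin 2)) :
    rot45 a - rot45 b = rot45 (a - b) := by
  ext i
  fin_cases i <;> simp [rot45, mk2] <;> ring

lemma norm_rot45 (v : EuclideanSpace ℝ (Fin 2)) : ‖rot45 v‖ = ‖v‖ := by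
  have h2 : Real.sqrt 2 ≠ 0 := ne_of_gt q_pos
  rw [EuclideanSpace.norm_eq, EuclideanSpace.norm_eq]
  congr 1
  simp only [Fin.sum_univ_two, Real.norm_eq_abs, sq_abs, rot45, mk2_zero, mk2_one]
  field_simp
  linear_combination (-(v 0)^2 - (v 1)^2) * q_sq

end RSaux

namespace RSaux

/-- linear functional in direction `(c,s)` -/
def fdir (c s : ℝ) (p : EuclideanSpace ℝ (Fin 2)) : ℝ := c * p 0 + s * p 1

lemma fdir_corner (r c s a b : ℝ) (p : EuclideanSpace ℝ (Fin 2)) :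
    fdir c s (r • p + mk2 a b) = r * fdir c s p + (c * a + s * b) := by
  simp [fdir]; ring

lemma fdir_rot (r c s a b : ℝ) (p : EuclideanSpace ℝ (Fin 2)) :
    fdir c s (r • rot45 p + mk2 a b) =
      r * fdir ((c + s) * Real.sqrt 2 / 2) ((s - c) * Real.sqrt 2 / 2) p + (c * a + s * b) := by
  have h2 : Real.sqrt 2 ≠ 0 := ne_of_gt q_pos
  simp [fdir, rot45]
  field_simp
  linear_combination (-(c*r*(p 0)) + c*r*(p 1) - r*(p 0)*s - r*(p 1)*s) * q_sq

lemma fdir_mem (c s : ℝ) {p : EuclideanSpace ℝ (Fin 2)} (hp : p ∈ unitSq) :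
    min c 0 + min s 0 ≤ fdir c s p ∧ fdir c s p ≤ max c 0 + max s 0 := by
  rw [mem_unitSq] at hp
  obtain ⟨h1, h2, h3, h4⟩ := hp
  have hc : min c 0 ≤ c * p 0 ∧ c * p 0 ≤ max c 0 := by
    rcases le_total c 0 with h | h
    · constructor
      · rw [min_eq_left h]; nlinarith
      · rw [max_eq_right h]; nlinarith
    · constructor
      · rw [min_eq_right h]; positivity
      · rw [max_eq_left h]; nlinarith
  have hs : min s 0 ≤ s * p 1 ∧ s * p 1 ≤ max s 0 := by
    rcases le_total s 0 with h | h
    · constructor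
      · rw [min_eq_left h]; nlinarith
      · rw [max_eq_right h]; nlinarith
    · constructor
      · rw [min_eq_right h]; positivity
      · rw [max_eq_left h]; nlinarith
  exact ⟨by simp only [fdir]; linarith [hc.1, hs.1], by simp only [fdir]; linarith [hc.2, hs.2]⟩

lemma mapsTo_corner {r a b : ℝ} (hr0 : 0 ≤ r) (ha0 : 0 ≤ a) (ha1 : a + r ≤ 1)
    (hb0 : 0 ≤ b) (hb1 : b + r ≤ 1) {p : EuclideanSpace ℝ (Fin 2)} (hp : p ∈ unitSq) :
    r • p + mk2 a b ∈ unitSq := by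
  rw [mem_unitSq] at hp ⊢
  obtain ⟨h1, h2, h3, h4⟩ := hp
  simp only [add_apply, smul_apply, mk2_zero, mk2_one]
  refine ⟨by nlinarith, by nlinarith, by nlinarith, by nlinarith⟩

lemma mapsTo_rot {r : ℝ} (hr0 : 0 ≤ r) (hr : r < 1/2) {p : EuclideanSpace ℝ (Fin 2)}
    (hp : p ∈ unitSq) :
    r • rot45 p + mk2 (1/2) (1/2 - (Real.sqrt 2/2) * r) ∈ unitSq := by
  rw [mem_unitSq] at hp ⊢
  obtain ⟨h1, h2, h3, h4⟩ := hp
  simp only [add_apply, smul_apply, mk2_zero, mk2_one, rot45, div_sqrt2]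
  have hq1 := q_gt
  have hq2 := q_lt
  have hrq0 : 0 ≤ r * Real.sqrt 2 := by positivity
  have hrq : r * Real.sqrt 2 < 3/4 := by nlinarith
  have e1 := mul_le_mul_of_nonneg_left (show p 0 - p 1 ≤ 1 by linarith) hrq0
  have e2 := mul_le_mul_of_nonneg_left (show (-1:ℝ) ≤ p 0 - p 1 by linarith) hrq0
  have e3 := mul_le_mul_of_nonneg_left (show p 0 + p 1 ≤ 2 by linarith) hrq0
  have e4 := mul_le_mul_of_nonneg_left (show (0:ℝ) ≤ p 0 + p 1 by linarith) hrq0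
  refine ⟨by nlinarith, by nlinarith, by nlinarith, by nlinarith⟩

end RSaux

namespace RSaux

lemma dist_corner {r : ℝ} (hr0 : 0 ≤ r) (a b : ℝ) (y z : EuclideanSpace ℝ (Fin 2)) :
    dist (r • y + mk2 a b) (r • z + mk2 a b) = r * dist y z := by
  rw [dist_eq_norm, dist_eq_norm]
  have h : (r • y + mk2 a b) - (r • z + mk2 a b) = r • (y - z) := by
    ext i; simp; ring
  rw [h, norm_smul, Real.norm_eq_abs, abs_of_nonneg hr0]

lemma dist_rot {r : ℝ} (hr0 : 0 ≤ r) (a b : ℝ) (y z : EuclideanSpace ℝ (Fin 2)) :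
    dist (r • rot45 y + mk2 a b) (r • rot45 z + mk2 a b) = r * dist y z := by
  rw [dist_eq_norm, dist_eq_norm]
  have h : (r • rot45 y + mk2 a b) - (r • rot45 z + mk2 a b) = r • (rot45 y - rot45 z) := by
    ext i; simp; ring
  rw [h, rot45_sub, norm_smul, Real.norm_eq_abs, abs_of_nonneg hr0, norm_rot45]

section Main

variable {r : ℝ} {K : Set (EuclideanSpace ℝ (Fin 2))}
variable (hKattr : K =
      ((fun p => r • p) '' K) ∪
      ((fun p => r • p + mk2 (1 - r) 0) '' K) ∪
      ((fun p => r • p + mk2 0 (1 - r)) '' K) ∪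
      ((fun p => r • p + mk2 (1 - r) (1 - r)) '' K) ∪
      ((fun p => r • rot45 p + mk2 (1 / 2) (1 / 2 - (Real.sqrt 2 / 2) * r)) '' K))

include hKattr

lemma piece1 {y : EuclideanSpace ℝ (Fin 2)} (hy : y ∈ K) : r • y ∈ K := by
  rw [hKattr]
  exact mem_union_left _ (mem_union_left _ (mem_union_left _ (mem_union_left _
    (mem_image_of_mem _ hy))))

lemma piece2 {y : EuclideanSpace ℝ (Fin 2)} (hy : y ∈ K) : r • y + mk2 (1-r) 0 ∈ K := by
  rw [hKattr]
  exact mem_union_left _ (mem_union_left _ (mem_union_left _ (mem_union_right _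
    (mem_image_of_mem _ hy))))

lemma piece3 {y : EuclideanSpace ℝ (Fin 2)} (hy : y ∈ K) : r • y + mk2 0 (1-r) ∈ K := by
  rw [hKattr]
  exact mem_union_left _ (mem_union_left _ (mem_union_right _ (mem_image_of_mem _ hy)))

lemma piece4 {y : EuclideanSpace ℝ (Fin 2)} (hy : y ∈ K) : r • y + mk2 (1-r) (1-r) ∈ K := by
  rw [hKattr]
  exact mem_union_left _ (mem_union_right _ (mem_image_of_mem _ hy))

lemma piece5 {y : EuclideanSpace ℝ (Fin 2)} (hy : y ∈ K) :
    r • rot45 y + mk2 (1/2) (1/2 - (Real.sqrt 2/2) * r) ∈ K := by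
  rw [hKattr]
  exact mem_union_right _ (mem_image_of_mem _ hy)

lemma K_subset_unitSq (hr0 : 0 < r) (hr : r < 1/2) (hKne : K.Nonempty)
    (hKcpt : IsCompact K) : K ⊆ unitSq := by
  obtain ⟨R, hR⟩ := hKcpt.isBounded.subset_closedBall 0
  have hR0 : 0 ≤ R := by
    obtain ⟨x0, hx0⟩ := hKne
    exact le_trans dist_nonneg (Metric.mem_closedBall.mp (hR hx0))
  have hra : 0 ≤ 1 - r := by linarith
  have hrb : (1 - r) + r ≤ 1 := by linarith
  have hmaps : ∀ n : ℕ, ∀ x ∈ K, ∃ z ∈ unitSq, dist x z ≤ R * r ^ n := by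
    intro n
    induction n with
    | zero =>
      intro x hx
      refine ⟨0, fun i => by simp, ?_⟩
      simpa using Metric.mem_closedBall.mp (hR hx)
    | succ n ih =>
      intro x hx
      have key : ∀ (y : EuclideanSpace ℝ (Fin 2)), y ∈ K →
          ∀ (z : EuclideanSpace ℝ (Fin 2)), z ∈ unitSq → dist y z ≤ R * r ^ n →
          ∀ (Y U : EuclideanSpace ℝ (Fin 2)),
          (dist Y U = r * dist y z) → (U ∈ unitSq) →
          ∃ u ∈ unitSq, dist Y u ≤ R * r ^ (n+1) := by
        intro y hy z hz hdz Y U hw hwz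
        refine ⟨U, hwz, ?_⟩
        rw [hw, pow_succ]
        nlinarith [dist_nonneg (x := y) (y := z)]
      rw [hKattr] at hx
      rcases hx with ((((⟨y, hy, rfl⟩ | ⟨y, hy, rfl⟩) | ⟨y, hy, rfl⟩) | ⟨y, hy, rfl⟩) | ⟨y, hy, rfl⟩)
      · obtain ⟨z, hz, hdz⟩ := ih y hy
        have h0 : (r • y : EuclideanSpace ℝ (Fin 2)) = r • y + mk2 0 0 := by
          ext i; fin_cases i <;> simp
        beta_reduce
        rw [h0]
        exact key y hy z hz hdz _ _ (dist_corner hr0.le 0 0 y z)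
          (mapsTo_corner hr0.le le_rfl (by linarith) le_rfl (by linarith) hz)
      · obtain ⟨z, hz, hdz⟩ := ih y hy
        exact key y hy z hz hdz _ _ (dist_corner hr0.le (1-r) 0 y z)
          (mapsTo_corner hr0.le hra hrb le_rfl (by linarith) hz)
      · obtain ⟨z, hz, hdz⟩ := ih y hy
        exact key y hy z hz hdz _ _ (dist_corner hr0.le 0 (1-r) y z)
          (mapsTo_corner hr0.le le_rfl (by linarith) hra hrb hz)
      · obtain ⟨z, hz, hdz⟩ := ih y hy
        exact key y hy z hz hdz _ _ (dist_corner hr0.le (1-r) (1-r) y z)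
          (mapsTo_corner hr0.le hra hrb hra hrb hz)
      · obtain ⟨z, hz, hdz⟩ := ih y hy
        exact key y hy z hz hdz _ _ (dist_rot hr0.le _ _ y z) (mapsTo_rot hr0.le hr hz)
  intro x hx
  have hcl : x ∈ closure unitSq := by
    rw [Metric.mem_closure_iff]
    intro ε hε
    have hr1 : r < 1 := by linarith
    have htd : Filter.Tendsto (fun n : ℕ => R * r ^ n) Filter.atTop (nhds 0) := by
      simpa using (tendsto_pow_atTop_nhds_zero_of_lt_one hr0.le hr1).const_mul R
    obtain ⟨n, hn⟩ := (htd.eventually (gt_mem_nhds hε)).exists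
    obtain ⟨z, hz, hdz⟩ := hmaps n x hx
    exact ⟨z, hz, lt_of_le_of_lt hdz hn⟩
  rwa [isClosed_unitSq.closure_eq] at hcl

end Main
end RSaux

namespace RSaux

set_option maxHeartbeats 1000000 in
lemma cover_main {r : ℝ} (hr3 : 1/3 ≤ r) (hr2 : r < 1/2) (c s t : ℝ) (hcs : 0 ≤ c + s)
    (hm : min c 0 + min s 0 ≤ t) (hM : t ≤ max c 0 + max s 0) :
    (r * (min c 0 + min s 0) ≤ t ∧ t ≤ r * (max c 0 + max s 0)) ∨
    (r * (min c 0 + min s 0) + (1-r)*c ≤ t ∧ t ≤ r * (max c 0 + max s 0) + (1-r)*c) ∨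
    (r * (min c 0 + min s 0) + (1-r)*s ≤ t ∧ t ≤ r * (max c 0 + max s 0) + (1-r)*s) ∨
    (r * (min c 0 + min s 0) + (1-r)*(c+s) ≤ t ∧ t ≤ r * (max c 0 + max s 0) + (1-r)*(c+s)) ∨
    (r * (min ((c+s)*Real.sqrt 2/2) 0 + min ((s-c)*Real.sqrt 2/2) 0)
        + ((c+s)/2 - s*(Real.sqrt 2/2)*r) ≤ t ∧
     t ≤ r * (max ((c+s)*Real.sqrt 2/2) 0 + max ((s-c)*Real.sqrt 2/2) 0)
        + ((c+s)/2 - s*(Real.sqrt 2/2)*r)) := by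
  have hq2 : Real.sqrt 2 ^ 2 = 2 := q_sq
  have hq0 : (0:ℝ) < Real.sqrt 2 := q_pos
  have hqa : (1.4:ℝ) < Real.sqrt 2 := q_gt
  have hqb : Real.sqrt 2 < 1.5 := q_lt
  set q : ℝ := Real.sqrt 2 with hqdef
  have hr0 : (0:ℝ) < r := by linarith
  have hrq : (0:ℝ) ≤ r*(2+q) - 1 := by nlinarith
  have h12r : (0:ℝ) ≤ 1 - 2*r := by linarith
  have h3r1 : (0:ℝ) ≤ 3*r - 1 := by linarith
  have hcpl : 0 ≤ (c+s)*q/2 := by positivity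
  rcases le_total s c with hsc | hsc
  · -- s ≤ c, hence 0 ≤ c
    have hc0 : 0 ≤ c := by linarith
    have hsn : (s-c)*q/2 ≤ 0 := by
      apply div_nonpos_of_nonpos_of_nonneg _ (by norm_num)
      exact mul_nonpos_of_nonpos_of_nonneg (by linarith) hq0.le
    rw [min_eq_right hc0, max_eq_left hc0, min_eq_right hcpl, max_eq_left hcpl,
        min_eq_left hsn, max_eq_right hsn] at *
    have hA : (0:ℝ) ≤ c * (r*(2+q) - 1) := mul_nonneg hc0 hrq
    have hB : (0:ℝ) ≤ (c+s) * (1 - 2*r) := mul_nonneg hcs h12r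
    have hC : (0:ℝ) ≤ c * (3*r - 1) := mul_nonneg hc0 h3r1
    rcases le_total 0 s with hs0 | hs0
    · -- 0 ≤ s ≤ c
      rw [min_eq_right hs0, max_eq_left hs0] at *
      have hD : (0:ℝ) ≤ (c - s) * r := mul_nonneg (by linarith) hr0.le
      have hE : (0:ℝ) ≤ s * (3*r - 1) := mul_nonneg hs0 h3r1
      have hF : (0:ℝ) ≤ s * (r*(2+q) - 1) := mul_nonneg hs0 hrq
      rcases le_total t (r*(c+s)) with h1 | h1
      · exact Or.inl ⟨by linarith, by linarith⟩
      rcases le_total t ((1-r)*s + r*(c+s)) with h2 | h2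
      · refine Or.inr (Or.inr (Or.inl ⟨by linarith, by linarith⟩))
      rcases le_total t ((c+s)/2 + r*c*q/2) with h3 | h3
      · refine Or.inr (Or.inr (Or.inr (Or.inr ⟨by linarith, by linarith⟩)))
      rcases le_total t ((1-r)*c + r*(c+s)) with h4 | h4
      · refine Or.inr (Or.inl ⟨by linarith, by linarith⟩)
      · refine Or.inr (Or.inr (Or.inr (Or.inl ⟨by linarith, by linarith⟩)))
    · -- s ≤ 0 ≤ c
      rw [min_eq_left hs0, max_eq_right hs0] at *
      rcases le_total t (r*c + (1-r)*s) with h1 | h1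
      · refine Or.inr (Or.inr (Or.inl ⟨by linarith, by linarith⟩))
      rcases le_total t (r*c) with h2 | h2
      · exact Or.inl ⟨by linarith, by linarith⟩
      rcases le_total t ((c+s)/2 + r*c*q/2) with h3 | h3
      · refine Or.inr (Or.inr (Or.inr (Or.inr ⟨by linarith, by linarith⟩)))
      rcases le_total t ((1-r)*(c+s) + r*c) with h4 | h4
      · refine Or.inr (Or.inr (Or.inr (Or.inl ⟨by linarith, by linarith⟩)))
      · refine Or.inr (Or.inl ⟨by linarith, by linarith⟩)
  · -- c ≤ s, hence 0 ≤ s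
    have hs0 : 0 ≤ s := by linarith
    have hsp : 0 ≤ (s-c)*q/2 := div_nonneg (mul_nonneg (by linarith) hq0.le) (by norm_num)
    rw [min_eq_right hs0, max_eq_left hs0, min_eq_right hcpl, max_eq_left hcpl,
        min_eq_right hsp, max_eq_left hsp] at *
    have hA : (0:ℝ) ≤ s * (r*(2+q) - 1) := mul_nonneg hs0 hrq
    have hB : (0:ℝ) ≤ (c+s) * (1 - 2*r) := mul_nonneg hcs h12r
    have hC : (0:ℝ) ≤ s * (3*r - 1) := mul_nonneg hs0 h3r1
    have hD : (0:ℝ) ≤ (s - c) * (1 - 2*r) := mul_nonneg (by linarith) h12r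
    rcases le_total 0 c with hc0 | hc0
    · -- 0 ≤ c ≤ s
      rw [min_eq_right hc0, max_eq_left hc0] at *
      rcases le_total t (r*(c+s)) with h1 | h1
      · exact Or.inl ⟨by linarith, by linarith⟩
      rcases le_total t ((1-r)*c + r*(c+s)) with h2 | h2
      · refine Or.inr (Or.inl ⟨by linarith, by linarith⟩)
      rcases le_total t ((c+s)/2 + r*s*q/2) with h3 | h3
      · refine Or.inr (Or.inr (Or.inr (Or.inr ⟨by linarith, by linarith⟩)))
      rcases le_total t ((1-r)*s + r*(c+s)) with h4 | h4
      · refine Or.inr (Or.inr (Or.inl ⟨by linarith, by linarith⟩))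
      · refine Or.inr (Or.inr (Or.inr (Or.inl ⟨by linarith, by linarith⟩)))
    · -- c ≤ 0 ≤ s
      rw [min_eq_left hc0, max_eq_right hc0] at *
      rcases le_total t (r*s + (1-r)*c) with h1 | h1
      · refine Or.inr (Or.inl ⟨by linarith, by linarith⟩)
      rcases le_total t (r*s) with h2 | h2
      · exact Or.inl ⟨by linarith, by linarith⟩
      rcases le_total t ((c+s)/2 + r*s*q/2) with h3 | h3
      · refine Or.inr (Or.inr (Or.inr (Or.inr ⟨by linarith, by linarith⟩)))
      rcases le_total t ((1-r)*(c+s) + r*s) with h4 | h4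
      · refine Or.inr (Or.inr (Or.inr (Or.inl ⟨by linarith, by linarith⟩)))
      · refine Or.inr (Or.inr (Or.inl ⟨by linarith, by linarith⟩))

end RSaux

namespace RSaux

set_option maxHeartbeats 1000000 in
lemma cover {r : ℝ} (hr3 : 1/3 ≤ r) (hr2 : r < 1/2) (c s t : ℝ)
    (hm : min c 0 + min s 0 ≤ t) (hM : t ≤ max c 0 + max s 0) :
    (r * (min c 0 + min s 0) ≤ t ∧ t ≤ r * (max c 0 + max s 0)) ∨
    (r * (min c 0 + min s 0) + (1-r)*c ≤ t ∧ t ≤ r * (max c 0 + max s 0) + (1-r)*c) ∨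
    (r * (min c 0 + min s 0) + (1-r)*s ≤ t ∧ t ≤ r * (max c 0 + max s 0) + (1-r)*s) ∨
    (r * (min c 0 + min s 0) + (1-r)*(c+s) ≤ t ∧ t ≤ r * (max c 0 + max s 0) + (1-r)*(c+s)) ∨
    (r * (min ((c+s)*Real.sqrt 2/2) 0 + min ((s-c)*Real.sqrt 2/2) 0)
        + ((c+s)/2 - s*(Real.sqrt 2/2)*r) ≤ t ∧
     t ≤ r * (max ((c+s)*Real.sqrt 2/2) 0 + max ((s-c)*Real.sqrt 2/2) 0)
        + ((c+s)/2 - s*(Real.sqrt 2/2)*r)) := by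
  rcases le_total 0 (c+s) with hcs | hcs
  · exact cover_main hr3 hr2 c s t hcs hm hM
  · have e1 : ∀ x : ℝ, min (-x) 0 = - max x 0 := by
      intro x; rw [← neg_zero, min_neg_neg, neg_zero]
    have e2 : ∀ x : ℝ, max (-x) 0 = - min x 0 := by
      intro x; rw [← neg_zero, max_neg_neg, neg_zero]
    have h := cover_main hr3 hr2 (-c) (-s) (-t) (by linarith)
      (by rw [e1, e1]; linarith) (by rw [e2, e2]; linarith)
    rw [e1, e1, e2, e2] at h
    have e3 : (-c + -s) * Real.sqrt 2 / 2 = -((c+s) * Real.sqrt 2 / 2) := by ring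
    have e4 : (-s - -c) * Real.sqrt 2 / 2 = -((s-c) * Real.sqrt 2 / 2) := by ring
    rw [e3, e4, e1, e2, e1, e2] at h
    rcases h with ⟨ha, hb⟩ | ⟨ha, hb⟩ | ⟨ha, hb⟩ | ⟨ha, hb⟩ | ⟨ha, hb⟩
    · exact Or.inl ⟨by linarith, by linarith⟩
    · exact Or.inr (Or.inl ⟨by linarith, by linarith⟩)
    · exact Or.inr (Or.inr (Or.inl ⟨by linarith, by linarith⟩))
    · exact Or.inr (Or.inr (Or.inr (Or.inl ⟨by linarith, by linarith⟩)))
    · exact Or.inr (Or.inr (Or.inr (Or.inr ⟨by linarith, by linarith⟩)))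

end RSaux

namespace RSaux

lemma fdir_smul (r c s : ℝ) (p : EuclideanSpace ℝ (Fin 2)) :
    fdir c s (r • p) = r * fdir c s p := by
  simp [fdir]; ring

lemma abs_sum_le_of_sq (c s : ℝ) (h : c^2 + s^2 ≤ 2) : |c| + |s| ≤ 2 := by
  nlinarith [sq_abs c, sq_abs s, abs_nonneg c, abs_nonneg s, sq_nonneg (|c| - |s|)]

section Main

variable {r : ℝ} {K : Set (EuclideanSpace ℝ (Fin 2))}
variable (hKattr : K =
      ((fun p => r • p) '' K) ∪
      ((fun p => r • p + mk2 (1 - r) 0) '' K) ∪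
      ((fun p => r • p + mk2 0 (1 - r)) '' K) ∪
      ((fun p => r • p + mk2 (1 - r) (1 - r)) '' K) ∪
      ((fun p => r • rot45 p + mk2 (1 / 2) (1 / 2 - (Real.sqrt 2 / 2) * r)) '' K))

include hKattr

lemma approx (hr3 : 1/3 ≤ r) (hr2 : r < 1/2) (hKne : K.Nonempty) (hKsub : K ⊆ unitSq) :
    ∀ n : ℕ, ∀ c s t : ℝ, c^2 + s^2 ≤ 2 → min c 0 + min s 0 ≤ t → t ≤ max c 0 + max s 0 →
    ∃ x ∈ K, |fdir c s x - t| ≤ 2 * r ^ n := by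
  have hr0 : (0:ℝ) < r := by linarith
  intro n
  induction n with
  | zero =>
    intro c s t hn hm hM
    obtain ⟨x0, hx0⟩ := hKne
    refine ⟨x0, hx0, ?_⟩
    obtain ⟨hf1, hf2⟩ := fdir_mem c s (hKsub hx0)
    have habs : |c| + |s| ≤ 2 := abs_sum_le_of_sq c s hn
    have e1 : max c 0 - min c 0 = |c| := by rw [max_sub_min_eq_abs]; simp
    have e2 : max s 0 - min s 0 = |s| := by rw [max_sub_min_eq_abs]; simp
    rw [pow_zero, mul_one, abs_le]
    constructor <;> linarith
  | succ n ih =>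
    intro c s t hn hm hM
    have step : ∀ (d c' s' : ℝ), c'^2 + s'^2 ≤ 2 →
        r * (min c' 0 + min s' 0) + d ≤ t → t ≤ r * (max c' 0 + max s' 0) + d →
        (∀ y ∈ K, ∃ x ∈ K, fdir c s x = r * fdir c' s' y + d) →
        ∃ x ∈ K, |fdir c s x - t| ≤ 2 * r ^ (n+1) := by
      intro d c' s' hn' hl hu hmap
      set t' : ℝ := (t - d) / r with ht'
      have hrt' : r * t' = t - d := by
        rw [ht', mul_div_cancel₀ _ (ne_of_gt hr0)]
      have hm' : min c' 0 + min s' 0 ≤ t' := by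
        rw [ht', le_div_iff₀ hr0]; linarith
      have hM' : t' ≤ max c' 0 + max s' 0 := by
        rw [ht', div_le_iff₀ hr0]; linarith
      obtain ⟨y, hy, hfy⟩ := ih c' s' t' hn' hm' hM'
      obtain ⟨x, hx, hfx⟩ := hmap y hy
      refine ⟨x, hx, ?_⟩
      have : fdir c s x - t = r * (fdir c' s' y - t') := by
        rw [hfx]; rw [mul_sub, hrt']; ring
      rw [this, abs_mul, abs_of_nonneg hr0.le, pow_succ]
      calc r * |fdir c' s' y - t'| ≤ r * (2 * r ^ n) := by
            exact mul_le_mul_of_nonneg_left hfy hr0.le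
        _ = 2 * (r ^ n * r) := by ring
    rcases cover hr3 hr2 c s t hm hM with h | h | h | h | h
    · exact step 0 c s hn (by linarith [h.1]) (by linarith [h.2])
        (fun y hy => ⟨r • y, piece1 hKattr hy, by rw [fdir_smul]; ring⟩)
    · exact step ((1-r)*c) c s hn h.1 h.2
        (fun y hy => ⟨_, piece2 hKattr hy, by rw [fdir_corner]; ring⟩)
    · exact step ((1-r)*s) c s hn h.1 h.2
        (fun y hy => ⟨_, piece3 hKattr hy, by rw [fdir_corner]; ring⟩)
    · exact step ((1-r)*(c+s)) c s hn h.1 h.2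
        (fun y hy => ⟨_, piece4 hKattr hy, by rw [fdir_corner]; ring⟩)
    · have hrot : ((c+s)*Real.sqrt 2/2)^2 + ((s-c)*Real.sqrt 2/2)^2 = c^2 + s^2 := by
        linear_combination (((c+s)^2 + (s-c)^2)/4) * q_sq
      exact step ((c+s)/2 - s*(Real.sqrt 2/2)*r) ((c+s)*Real.sqrt 2/2) ((s-c)*Real.sqrt 2/2)
        (by rw [hrot]; exact hn) h.1 h.2
        (fun y hy => ⟨_, piece5 hKattr hy, by rw [fdir_rot]; ring⟩)

end Main
end RSaux

namespace RSaux

lemma span_rep {W : Submodule ℝ (EuclideanSpace ℝ (Fin 2))} (h : finrank ℝ W = 1) :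
    ∃ v : EuclideanSpace ℝ (Fin 2), v ≠ 0 ∧ W = Submodule.span ℝ {v} := by
  have hbot : W ≠ ⊥ := by
    intro hb; rw [hb] at h; simp [finrank_bot] at h
  obtain ⟨v, hvW, hv⟩ := Submodule.exists_mem_ne_zero_of_ne_bot hbot
  refine ⟨v, hv, ?_⟩
  have hle : Submodule.span ℝ {v} ≤ W := by simpa [Submodule.span_le] using hvW
  have hfr := finrank_span_singleton (K := ℝ) hv
  exact (Submodule.eq_of_le_of_finrank_le hle (by rw [h, hfr])).symm

lemma orthProj_span (v : EuclideanSpace ℝ (Fin 2)) (x : EuclideanSpace ℝ (Fin 2)) :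
    orthProj (Submodule.span ℝ {v}) x = ((inner ℝ v x : ℝ) / ‖v‖^2) • v := by
  rw [orthProj]
  rw [show Submodule.span ℝ {v} = ℝ ∙ v from rfl]
  rw [← Submodule.starProjection_apply, Submodule.starProjection_singleton]
  norm_num

lemma inner_two (v x : EuclideanSpace ℝ (Fin 2)) :
    (inner ℝ v x : ℝ) = v 0 * x 0 + v 1 * x 1 := by
  simp [PiLp.inner_apply, Fin.sum_univ_two, mul_comm]

lemma cont_fdir (c s : ℝ) : Continuous (fdir c s) := by
  have h0 : Continuous fun p : EuclideanSpace ℝ (Fin 2) => p 0 := by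
    simpa using (EuclideanSpace.proj (0 : Fin 2)).continuous
  have h1 : Continuous fun p : EuclideanSpace ℝ (Fin 2) => p 1 := by
    simpa using (EuclideanSpace.proj (1 : Fin 2)).continuous
  exact (continuous_const.mul h0).add (continuous_const.mul h1)

end RSaux


set_option maxHeartbeats 1000000 in
/-- The "rotated square in the middle" self-similar set has very thick shadows in every
direction iff `r ≥ 1/3`. -/
theorem rotatedSquare_veryThickShadows_iff
    (r : ℝ) (hr0 : 0 < r) (hr : r < 1 / 2)
    (K : Set (EuclideanSpace ℝ (Fin 2))) (hKne : K.Nonempty) (hKcpt : IsCompact K)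
    (hKattr : K =
      ((fun p => r • p) '' K) ∪
      ((fun p => r • p + mk2 (1 - r) 0) '' K) ∪
      ((fun p => r • p + mk2 0 (1 - r)) '' K) ∪
      ((fun p => r • p + mk2 (1 - r) (1 - r)) '' K) ∪
      ((fun p => r • rot45 p + mk2 (1 / 2) (1 / 2 - (Real.sqrt 2 / 2) * r)) '' K)) :
    (∀ (W : Submodule ℝ (EuclideanSpace ℝ (Fin 2))), finrank ℝ W = 1 →
      orthProj W '' K = orthProj W '' unitSq) ↔
    1 / 3 ≤ r := by

  have hq2 := RSaux.q_sq
  have hq0 := RSaux.q_pos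
  have hqa := RSaux.q_gt
  have hqb := RSaux.q_lt
  have hKsub := RSaux.K_subset_unitSq hKattr hr0 hr hKne hKcpt
  constructor
  · intro hfull
    by_contra hlt
    push_neg at hlt
    have hw0ne : (mk2 1 1 : EuclideanSpace ℝ (Fin 2)) ≠ 0 := by
      intro h
      have h0 : (mk2 1 1 : EuclideanSpace ℝ (Fin 2)) 0 = 0 := by rw [h]; rfl
      simp at h0
    have himg := hfull (Submodule.span ℝ {mk2 1 1}) (finrank_span_singleton hw0ne)
    have hps : mk2 ((1+r)/4) ((1+r)/4) ∈ unitSq := by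
      rw [RSaux.mem_unitSq]
      refine ⟨?_, ?_, ?_, ?_⟩ <;> simp <;> linarith
    have hmem : orthProj (Submodule.span ℝ {mk2 1 1}) (mk2 ((1+r)/4) ((1+r)/4)) ∈
        orthProj (Submodule.span ℝ {mk2 1 1}) '' K := by
      rw [himg]; exact Set.mem_image_of_mem _ hps
    obtain ⟨x, hxK, hxe⟩ := hmem
    have hsum : x 0 + x 1 = (1+r)/2 := by
      rw [RSaux.orthProj_span, RSaux.orthProj_span] at hxe
      have hinj := smul_left_injective ℝ hw0ne hxe
      have hn : (0:ℝ) < ‖(mk2 1 1 : EuclideanSpace ℝ (Fin 2))‖^2 :=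
        pow_pos (norm_pos_iff.mpr hw0ne) 2
      rw [div_eq_div_iff (ne_of_gt hn) (ne_of_gt hn)] at hinj
      have h2 := mul_right_cancel₀ (ne_of_gt hn) hinj
      rw [RSaux.inner_two, RSaux.inner_two] at h2
      simp only [RSaux.mk2_zero, RSaux.mk2_one, one_mul] at h2
      linarith
    rw [hKattr] at hxK
    rcases hxK with ((((⟨y, hy, rfl⟩ | ⟨y, hy, rfl⟩) | ⟨y, hy, rfl⟩) | ⟨y, hy, rfl⟩) | ⟨y, hy, rfl⟩)
    all_goals obtain ⟨ha0, ha1, hb0, hb1⟩ := RSaux.mem_unitSq.mp (hKsub hy)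
    · simp only [RSaux.smul_apply] at hsum
      nlinarith [mul_nonneg hr0.le ha0, mul_nonneg hr0.le hb0,
        mul_le_mul_of_nonneg_left ha1 hr0.le, mul_le_mul_of_nonneg_left hb1 hr0.le]
    · simp only [RSaux.add_apply, RSaux.smul_apply, RSaux.mk2_zero, RSaux.mk2_one] at hsum
      nlinarith [mul_nonneg hr0.le ha0, mul_nonneg hr0.le hb0]
    · simp only [RSaux.add_apply, RSaux.smul_apply, RSaux.mk2_zero, RSaux.mk2_one] at hsum
      nlinarith [mul_nonneg hr0.le ha0, mul_nonneg hr0.le hb0]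
    · simp only [RSaux.add_apply, RSaux.smul_apply, RSaux.mk2_zero, RSaux.mk2_one] at hsum
      nlinarith [mul_nonneg hr0.le ha0, mul_nonneg hr0.le hb0]
    · simp only [RSaux.add_apply, RSaux.smul_apply, RSaux.mk2_zero, RSaux.mk2_one,
        rot45, RSaux.div_sqrt2] at hsum
      have h5 : r * Real.sqrt 2 < r * 1.5 := by nlinarith
      nlinarith [mul_nonneg (mul_nonneg hr0.le hq0.le) ha0, h5,
        mul_nonneg (mul_nonneg hr0.le hq0.le) hb0]
  · intro hr3 W hW
    obtain ⟨v, hvne, hveq⟩ := RSaux.span_rep hW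
    subst hveq
    apply Set.Subset.antisymm
    · exact Set.image_mono hKsub
    · rintro z ⟨p, hp, rfl⟩
      have hv2 : 0 < v 0 ^2 + v 1 ^2 := by
        by_contra hc
        push_neg at hc
        have h0 : v 0 = 0 := by nlinarith [sq_nonneg (v 0), sq_nonneg (v 1)]
        have h1 : v 1 = 0 := by nlinarith [sq_nonneg (v 0), sq_nonneg (v 1)]
        exact hvne (by ext i; fin_cases i <;> simp [h0, h1])
      set L := Real.sqrt (v 0^2 + v 1^2) with hLdef
      have hL0 : 0 < L := Real.sqrt_pos.mpr hv2
      have hL2 : L^2 = v 0^2 + v 1^2 := Real.sq_sqrt hv2.le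
      have hcs : (v 0 / L)^2 + (v 1 / L)^2 ≤ 2 := by
        have he : (v 0 / L)^2 + (v 1 / L)^2 = 1 := by
          rw [div_pow, div_pow, ← add_div, hL2, div_self (ne_of_gt hv2)]
        rw [he]; norm_num
      obtain ⟨htm, htM⟩ := RSaux.fdir_mem (v 0 / L) (v 1 / L) hp
      have himg : RSaux.fdir (v 0 / L) (v 1 / L) p ∈ RSaux.fdir (v 0 / L) (v 1 / L) '' K := by
        have hclosed : IsClosed (RSaux.fdir (v 0 / L) (v 1 / L) '' K) :=
          (hKcpt.image (RSaux.cont_fdir _ _)).isClosed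
        rw [← hclosed.closure_eq, Metric.mem_closure_iff]
        intro ε hε
        have htd : Filter.Tendsto (fun n : ℕ => 2 * r ^ n) Filter.atTop (nhds 0) := by
          simpa using (tendsto_pow_atTop_nhds_zero_of_lt_one hr0.le (by linarith)).const_mul 2
        obtain ⟨n, hn⟩ := (htd.eventually (gt_mem_nhds hε)).exists
        obtain ⟨x, hxK, hfx⟩ := RSaux.approx hKattr hr3 hr hKne hKsub n (v 0 / L) (v 1 / L)
          (RSaux.fdir (v 0 / L) (v 1 / L) p) hcs htm htM
        exact ⟨_, Set.mem_image_of_mem _ hxK,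
          by rw [Real.dist_eq, abs_sub_comm]; exact lt_of_le_of_lt hfx hn⟩
      obtain ⟨x, hxK, hfx⟩ := himg
      refine ⟨x, hxK, ?_⟩
      rw [RSaux.orthProj_span, RSaux.orthProj_span]
      have hinner : (inner ℝ v x : ℝ) = inner ℝ v p := by
        rw [RSaux.inner_two, RSaux.inner_two]
        simp only [RSaux.fdir] at hfx
        have hLne : L ≠ 0 := ne_of_gt hL0
        field_simp at hfx
        linarith
      rw [hinner]
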